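/- If a simple graph G on vertex set [n] is closed with respect to the labeling (i.e., for all edges {i,j} and {k,l} with i<j and k<l, one has {j,l} ∈ E(G) whenever i=k, and {i,k} ∈ E(G) whenever j=l), then G is chordal, i.e., every cycle of length greater than 3 has a chord. -/

import Mathlib

/-- A simple graph on `[n]` (here `Fin n`) is *closed with respect to the given labeling*
if for all edges `{i,j}` and `{k,l}` with `i < j` and `k < l`:
if `i = k` then `{j,l}` is an edge, and if `j = l` then `{i,k}` is an edge. -/
def SimpleGraph.IsClosed {n : ℕ} (G : SimpleGraph (Fin n)) : Prop :=
  ∀ ⦃i j k l : Fin n⦄, G.Adj i j → G.Adj k l → i < j → k < l →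
    (i = k → j ≠ l → G.Adj j l) ∧ (j = l → i ≠ k → G.Adj i k)

open SimpleGraph Walk in
lemma key_chord {n : ℕ} {G : SimpleGraph (Fin n)} (hG : G.IsClosed)
    (m : Fin n) (d : G.Walk m m) (hd : d.IsCycle) (hlen : 3 < d.length)
    (hmin : ∀ x ∈ d.support, m ≤ x) :
    ∃ a b : Fin n, a ∈ d.support ∧ b ∈ d.support ∧ G.Adj a b ∧ s(a, b) ∉ d.edges := by
  have hnn : ¬ d.Nil := by rw [Walk.not_nil_iff_lt_length]; omega
  obtain ⟨a, hma, p, rfl⟩ := Walk.not_nil_iff.mp hnn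
  have hplen : 3 ≤ p.length := by simp at hlen; omega
  have hpnn : ¬ p.reverse.Nil := by
    rw [Walk.not_nil_iff_lt_length, Walk.length_reverse]; omega
  obtain ⟨b, hmb, r, hrev⟩ := Walk.not_nil_iff.mp hpnn
  have hrlen : r.length + 1 = p.length := by
    have := congrArg Walk.length hrev
    simpa [Walk.length_reverse] using this.symm
  -- p is a path
  have hp : p.IsPath := by
    apply Walk.IsPath.mk'
    have := hd.2
    simpa using this
  have hprev : p.reverse.IsPath := hp.reverse
  rw [hrev, Walk.cons_isPath_iff] at hprev
  obtain ⟨hr, hmr⟩ := hprev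
  -- memberships
  have hain : a ∈ (Walk.cons hma p).support := by
    simp [Walk.support_cons]
  have hbin : b ∈ (Walk.cons hma p).support := by
    have : b ∈ p.reverse.support := by rw [hrev]; simp
    rw [Walk.support_reverse, List.mem_reverse] at this
    simp [Walk.support_cons, this]
  -- inequalities
  have hmla : m < a := lt_of_le_of_ne (hmin a hain) (G.ne_of_adj hma)
  have hmlb : m < b := lt_of_le_of_ne (hmin b hbin) (G.ne_of_adj hmb)
  have hab : a ≠ b := by
    rintro rfl
    have : r = Walk.nil := Walk.isPath_iff_eq_nil.mp hr
    rw [this] at hrlen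
    simp at hrlen
    omega
  -- the chord
  have hadj : G.Adj a b := (hG hma hmb hmla hmlb).1 rfl hab
  refine ⟨a, b, hain, hbin, hadj, ?_⟩
  intro hmem
  rw [Walk.edges_cons, List.mem_cons] at hmem
  rcases hmem with h1 | h2
  · rw [Sym2.eq_iff] at h1
    rcases h1 with ⟨ham, _⟩ | ⟨_, hbm⟩
    · exact absurd ham hmla.ne'
    · exact absurd hbm hmlb.ne'
  · -- s(a,b) ∈ p.edges, hence in p.reverse.edges
    have h2' : s(a, b) ∈ p.reverse.edges := by
      rw [Walk.edges_reverse, List.mem_reverse]; exact h2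
    rw [hrev, Walk.edges_cons, List.mem_cons] at h2'
    rcases h2' with h1 | h2'
    · rw [Sym2.eq_iff] at h1
      rcases h1 with ⟨ham, _⟩ | ⟨hab', _⟩
      · exact absurd ham hmla.ne'
      · exact absurd hab' hab
    · -- s(a,b) ∈ r.edges, r : Walk b a path
      have hrnn : ¬ r.Nil := by
        rw [Walk.not_nil_iff_lt_length]; omega
      obtain ⟨x, hbx, r₂, hr2⟩ := Walk.not_nil_iff.mp hrnn
      rw [hr2, Walk.cons_isPath_iff] at hr
      obtain ⟨hr2p, hbr2⟩ := hr
      rw [hr2, Walk.edges_cons, List.mem_cons] at h2'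
      rcases h2' with h1 | h3
      · rw [Sym2.eq_iff] at h1
        rcases h1 with ⟨rfl, rfl⟩ | ⟨rfl, _⟩
        · exact absurd rfl hab
        · -- x = a, r₂ : Walk a a path ⇒ nil ⇒ r.length = 1
          have : r₂ = Walk.nil := Walk.isPath_iff_eq_nil.mp hr2p
          rw [this] at hr2
          have := congrArg Walk.length hr2
          simp at this
          omega
      · exact hbr2 (Walk.snd_mem_support_of_mem_edges r₂ h3)

/-- If `G` is closed with respect to the labeling, then `G` is chordal: every cycle of
length greater than `3` has a chord, i.e. an edge of `G` joining two vertices of the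
cycle which is not an edge of the cycle. -/
theorem closed_implies_chordal {n : ℕ} (G : SimpleGraph (Fin n)) (hG : G.IsClosed) :
    ∀ (v : Fin n) (c : G.Walk v v), c.IsCycle → 3 < c.length →
      ∃ u w : Fin n, u ∈ c.support ∧ w ∈ c.support ∧ G.Adj u w ∧ s(u, w) ∉ c.edges := by
  intro v c hc hlen
  have hvs : v ∈ c.support := c.start_mem_support
  set s : Finset (Fin n) := c.support.toFinset with hs
  have hsne : s.Nonempty := ⟨v, by simp [hs]⟩
  set m := s.min' hsne with hmdef
  have hm : m ∈ c.support := by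
    have := s.min'_mem hsne
    simpa [hs] using this
  have hmin : ∀ x ∈ c.support, m ≤ x := fun x hx => s.min'_le x (by simp [hs, hx])
  set d := c.rotate m hm with hddef
  have hdc : d.IsCycle := hc.rotate hm
  have hdlen : d.length = c.length := by
    have h1 := congrArg SimpleGraph.Walk.length (c.take_spec hm)
    rw [SimpleGraph.Walk.length_append] at h1
    rw [hddef, SimpleGraph.Walk.rotate, SimpleGraph.Walk.length_append]
    omega
  have hsub : ∀ x ∈ d.support, x ∈ c.support := by
    intro x hx
    rw [d.support_eq_cons, List.mem_cons] at hx
    rcases hx with rfl | hx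
    · exact hm
    · have : x ∈ c.support.tail := ((c.support_rotate m hm).perm.mem_iff).mp hx
      rw [c.support_eq_cons]
      exact List.mem_cons_of_mem _ this
  obtain ⟨a, b, ha, hb, hadj, hne⟩ :=
    key_chord hG m d hdc (by omega) (fun x hx => hmin x (hsub x hx))
  refine ⟨a, b, hsub a ha, hsub b hb, hadj, ?_⟩
  intro hmem
  exact hne (((c.rotate_edges m hm).perm.mem_iff).mpr hmem)
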